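/- Let Φ be a DGF and k₃ > 0, and let ν₁(x) = k₃⁻¹ Φ(k₃² x). Then for every x ≠ 0, lim_{α→0} ν₁(α² x)² / α² = |x|. -/

import Mathlib

open Filter Set

/-- Definition 2: Differentiator Generating Function. -/
structure IsDGF (Φ : ℝ → ℝ) : Prop where
  continuous : Continuous Φ
  odd : ∀ x, Φ (-x) = -Φ x
  diff : ∀ x ≠ 0, DifferentiableAt ℝ Φ x
  diff' : ∀ x ≠ 0, DifferentiableAt ℝ (deriv Φ) x
  cont' : ContinuousOn (deriv Φ) {(0:ℝ)}ᶜ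
  cont'' : ContinuousOn (deriv (deriv Φ)) {(0:ℝ)}ᶜ
  pos : ∀ x ≠ 0, 0 < deriv Φ x
  blowup : Tendsto (fun x => |deriv Φ x|) (nhdsWithin 0 {(0:ℝ)}ᶜ) atTop
  ratio : Tendsto (fun x => |2 * (deriv Φ x)^3 / deriv (deriv Φ) x|)
      (nhdsWithin 0 {(0:ℝ)}ᶜ) (nhds 1)

/-- Helper: extract a δ from an eventual statement on the punctured neighborhood of 0. -/
lemma DGFaux.eventually_punctured {p : ℝ → Prop}
    (h : ∀ᶠ y in nhdsWithin 0 {(0:ℝ)}ᶜ, p y) :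
    ∃ δ > 0, ∀ y : ℝ, y ≠ 0 → |y| < δ → p y := by
  rw [eventually_nhdsWithin_iff, Metric.eventually_nhds_iff] at h
  obtain ⟨δ, hδ, h⟩ := h
  exact ⟨δ, hδ, fun y hy hyd => h (by simpa [Real.dist_eq] using hyd) hy⟩

/-- Helper: a function with nonnegative derivative on `(0, δ)` and limit `0` at `0⁺`
is nonnegative on `(0, δ)`. -/
lemma DGFaux.nonneg_of_deriv (f : ℝ → ℝ) (δ : ℝ)
    (hder : ∀ y ∈ Ioo (0:ℝ) δ, ∃ d : ℝ, 0 ≤ d ∧ HasDerivAt f d y)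
    (hlim : Tendsto f (nhdsWithin 0 (Ioi 0)) (nhds 0)) :
    ∀ y ∈ Ioo (0:ℝ) δ, 0 ≤ f y := by
  intro y hy
  have hmono : MonotoneOn f (Ioo 0 δ) := by
    apply monotoneOn_of_deriv_nonneg (convex_Ioo _ _)
    · exact fun z hz => ((hder z hz).choose_spec.2).continuousAt.continuousWithinAt
    · intro z hz
      rw [interior_Ioo] at hz
      exact ((hder z hz).choose_spec.2).differentiableAt.differentiableWithinAt
    · intro z hz
      rw [interior_Ioo] at hz
      obtain ⟨d, hd0, hd⟩ := hder z hz
      rw [hd.deriv]; exact hd0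
  have hev : ∀ᶠ s in nhdsWithin 0 (Ioi 0), f s ≤ f y := by
    filter_upwards [Ioo_mem_nhdsGT_of_mem ⟨le_refl (0:ℝ), hy.1⟩] with s hs
    exact hmono ⟨hs.1, hs.2.trans hy.2⟩ hy hs.2.le
  exact le_of_tendsto hlim hev

/-- Key asymptotics: `Φ(y)² / y → 1` as `y → 0⁺`. -/
lemma DGFaux.phi_sq_div (Φ : ℝ → ℝ) (hΦ : IsDGF Φ) :
    Tendsto (fun y => (Φ y)^2 / y) (nhdsWithin 0 (Ioi 0)) (nhds 1) := by
  have Φ0 : Φ 0 = 0 := by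
    have := hΦ.odd 0; simp at this; linarith
  set D := deriv Φ with hD
  set D2 := deriv (deriv Φ) with hD2
  set g : ℝ → ℝ := fun y => ((D y)^2)⁻¹ with hg
  set g' : ℝ → ℝ := fun y => -(2 * D y * D2 y) / ((D y)^2)^2 with hg'
  -- g tends to 0
  have hg0 : Tendsto g (nhdsWithin 0 {(0:ℝ)}ᶜ) (nhds 0) := by
    have h1 : Tendsto (fun y => (D y)^2) (nhdsWithin 0 {(0:ℝ)}ᶜ) atTop := by
      have := hΦ.blowup.atTop_mul_atTop₀ hΦ.blowup
      refine this.congr fun y => ?_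
      rw [← abs_mul, ← sq, abs_sq]
    exact h1.inv_tendsto_atTop
  have hg0' : Tendsto g (nhdsWithin 0 (Ioi 0)) (nhds 0) :=
    hg0.mono_left (nhdsWithin_mono _ (fun y hy => ne_of_gt hy))
  -- derivative of g
  have hgder : ∀ y : ℝ, y ≠ 0 → HasDerivAt g (g' y) y := by
    intro y hy
    have hDy : D y ≠ 0 := ne_of_gt (hΦ.pos y hy)
    have h1 : HasDerivAt D (D2 y) y := (hΦ.diff' y hy).hasDerivAt
    have h2 : HasDerivAt (fun z => (D z)^2) (2 * D y * D2 y) y := by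
      have := h1.fun_pow 2
      simpa [mul_comm, mul_assoc, mul_left_comm] using this
    have h3 := h2.fun_inv (pow_ne_zero 2 hDy)
    simpa [hg'] using h3
  -- |g'| tends to 4
  have hratio4 : Tendsto (fun y => |g' y|) (nhdsWithin 0 {(0:ℝ)}ᶜ) (nhds 4) := by
    have h4 : Tendsto (fun y => 4 / |2 * (D y)^3 / D2 y|) (nhdsWithin 0 {(0:ℝ)}ᶜ)
        (nhds 4) := by
      have := (tendsto_const_nhds (x := (4:ℝ))).div hΦ.ratio one_ne_zero
      simpa [Pi.div_def] using this
    refine h4.congr' ?_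
    have hhalf : ∀ᶠ y in nhdsWithin 0 {(0:ℝ)}ᶜ, (1:ℝ)/2 < |2 * (D y)^3 / D2 y| :=
      hΦ.ratio.eventually (eventually_gt_nhds (by norm_num))
    filter_upwards [hhalf, self_mem_nhdsWithin] with y hy hy0
    have hy0' : y ≠ 0 := hy0
    have hDy : D y ≠ 0 := ne_of_gt (hΦ.pos y hy0')
    have hD2y : D2 y ≠ 0 := by
      intro h; rw [h] at hy; simp at hy; linarith
    rw [hg']
    rw [abs_div, abs_div]
    rw [div_div_eq_mul_div, div_eq_div_iff (by positivity) (by positivity)]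
    have : |(-(2 * D y * D2 y))| = 2 * |D y| * |D2 y| := by
      rw [abs_neg, abs_mul, abs_mul]; simp
    rw [this]
    have h5 : |2 * (D y)^3| = 2 * |D y|^3 := by
      rw [abs_mul, abs_pow]; simp
    rw [h5]
    have h6 : |((D y)^2)^2| = |D y|^4 := by
      rw [abs_pow, abs_pow]; ring
    rw [h6]
    ring
  -- Step 1 : g y / y → 4 as y → 0⁺
  have hkey : Tendsto (fun y => g y / y) (nhdsWithin 0 (Ioi 0)) (nhds 4) := by
    rw [Metric.tendsto_nhds]
    intro ε hε
    set ε' : ℝ := min (ε/2) 2 with hε'def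
    have hε'pos : 0 < ε' := lt_min (by linarith) (by norm_num)
    have hε'le : ε' ≤ 2 := min_le_right _ _
    have hε'lt : ε' < ε := lt_of_le_of_lt (min_le_left _ _) (by linarith)
    have hev : ∀ᶠ y in nhdsWithin 0 {(0:ℝ)}ᶜ, |g' y| ∈ Ioo (4 - ε') (4 + ε') :=
      hratio4.eventually_mem (Ioo_mem_nhds (show (4:ℝ) - ε' < 4 by linarith)
        (show (4:ℝ) < 4 + ε' by linarith))
    obtain ⟨δ, hδpos, hδ⟩ := DGFaux.eventually_punctured hev
    -- bounds on |g'| inside (0, δ)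
    have hbd : ∀ z ∈ Ioo (0:ℝ) δ, |g' z| ∈ Ioo (4 - ε') (4 + ε') := by
      intro z hz
      exact hδ z (ne_of_gt hz.1) (by rw [abs_of_pos hz.1]; exact hz.2)
    have hne : ∀ z ∈ Ioo (0:ℝ) δ, g' z ≠ 0 := by
      intro z hz h0
      have := (hbd z hz).1
      rw [h0, abs_zero] at this; linarith
    -- continuity of g' on (0, δ)
    have hgc : ContinuousOn g' (Ioo 0 δ) := by
      have hsub : Ioo (0:ℝ) δ ⊆ {(0:ℝ)}ᶜ := fun z hz => ne_of_gt hz.1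
      have hDc : ContinuousOn D (Ioo 0 δ) := hΦ.cont'.mono hsub
      have hD2c : ContinuousOn D2 (Ioo 0 δ) := hΦ.cont''.mono hsub
      apply ContinuousOn.div
      · exact ((continuousOn_const.mul hDc).mul hD2c).neg
      · exact (hDc.pow 2).pow 2
      · intro z hz
        exact pow_ne_zero 2 (pow_ne_zero 2 (ne_of_gt (hΦ.pos z (ne_of_gt hz.1))))
    -- sign of g' : positive on (0, δ)
    have hsign : ∀ z ∈ Ioo (0:ℝ) δ, 0 < g' z := by
      by_contra hcon
      push_neg at hcon
      obtain ⟨a, ha, ha0⟩ := hcon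
      -- then g' < 0 on all of (0,δ)
      have hneg : ∀ z ∈ Ioo (0:ℝ) δ, g' z ≤ 0 := by
        intro z hz
        by_contra hzpos
        push_neg at hzpos
        have hsubicc : uIcc a z ⊆ Ioo (0:ℝ) δ := by
          apply (ordConnected_Ioo).uIcc_subset ha hz
        have h0mem : (0:ℝ) ∈ uIcc (g' a) (g' z) := by
          rw [mem_uIcc]; left; exact ⟨ha0, hzpos.le⟩
        obtain ⟨c, hc, hc0⟩ := intermediate_value_uIcc (hgc.mono hsubicc) h0mem
        exact hne c (hsubicc hc) hc0
      -- apply helper to -g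
      have hnn := DGFaux.nonneg_of_deriv (fun y => -g y) δ
        (fun z hz => ⟨-(g' z), by simpa using hneg z hz,
          (hgder z (ne_of_gt hz.1)).neg⟩)
        (by simpa using hg0'.neg)
      have hy2 : (δ/2) ∈ Ioo (0:ℝ) δ := ⟨by linarith, by linarith⟩
      have h1 := hnn _ hy2
      have h2 : 0 < g (δ/2) := by
        have := hΦ.pos (δ/2) (by positivity)
        rw [hg]; positivity
      simp at h1; linarith
    -- hence g' ∈ (4-ε', 4+ε') on (0, δ)
    have hgin : ∀ z ∈ Ioo (0:ℝ) δ, g' z ∈ Ioo (4 - ε') (4 + ε') := by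
      intro z hz
      have := hbd z hz
      rwa [abs_of_pos (hsign z hz)] at this
    -- upper bound : g y ≤ (4+ε') y
    have hup := DGFaux.nonneg_of_deriv (fun y => (4 + ε') * y - g y) δ
      (fun z hz => ⟨(4 + ε') - g' z, by have := (hgin z hz).2; linarith,
        by simpa using ((hasDerivAt_id z).const_mul (4 + ε')).fun_sub (hgder z (ne_of_gt hz.1))⟩)
      (by
        have h1 : Tendsto (fun y : ℝ => (4 + ε') * y) (nhdsWithin 0 (Ioi 0)) (nhds 0) := by
          have hc : Continuous (fun y : ℝ => (4 + ε') * y) := by fun_prop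
          have h2 := hc.tendsto 0
          simp only [mul_zero] at h2
          exact h2.mono_left nhdsWithin_le_nhds
        simpa using h1.sub hg0')
    -- lower bound : (4-ε') y ≤ g y
    have hlo := DGFaux.nonneg_of_deriv (fun y => g y - (4 - ε') * y) δ
      (fun z hz => ⟨g' z - (4 - ε'), by have := (hgin z hz).1; linarith,
        by simpa using (hgder z (ne_of_gt hz.1)).fun_sub ((hasDerivAt_id z).const_mul (4 - ε'))⟩)
      (by
        have h1 : Tendsto (fun y : ℝ => (4 - ε') * y) (nhdsWithin 0 (Ioi 0)) (nhds 0) := by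
          have hc : Continuous (fun y : ℝ => (4 - ε') * y) := by fun_prop
          have h2 := hc.tendsto 0
          simp only [mul_zero] at h2
          exact h2.mono_left nhdsWithin_le_nhds
        simpa using hg0'.sub h1)
    filter_upwards [Ioo_mem_nhdsGT_of_mem ⟨le_refl (0:ℝ), hδpos⟩] with y hy
    have h1 := hup y hy
    have h2 := hlo y hy
    have hypos : 0 < y := hy.1
    rw [Real.dist_eq]
    have hle : g y / y ≤ 4 + ε' := by
      rw [div_le_iff₀ hypos]; linarith
    have hge : 4 - ε' ≤ g y / y := by
      rw [le_div_iff₀ hypos]; linarith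
    rw [abs_lt]
    constructor <;> [linarith; linarith]
  -- Step 2 : D y * √y → 1/2
  have hDsqrt : Tendsto (fun y => D y * Real.sqrt y) (nhdsWithin 0 (Ioi 0)) (nhds (1/2)) := by
    have hinv : Tendsto (fun y => y / g y) (nhdsWithin 0 (Ioi 0)) (nhds (1/4)) := by
      have h2 := hkey.inv₀ (show (4:ℝ) ≠ 0 by norm_num)
      have h3 : ((4:ℝ))⁻¹ = 1/4 := by norm_num
      rw [h3] at h2
      exact h2.congr fun y => by rw [inv_div]
    have hs : Tendsto (fun y => Real.sqrt (y / g y)) (nhdsWithin 0 (Ioi 0))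
        (nhds (Real.sqrt (1/4))) :=
      (Real.continuous_sqrt.tendsto _).comp hinv
    have h14 : Real.sqrt ((1:ℝ)/4) = 1/2 := by
      rw [show (1/4:ℝ) = (1/2)^2 by norm_num, Real.sqrt_sq (by norm_num)]
    rw [h14] at hs
    refine hs.congr' ?_
    filter_upwards [self_mem_nhdsWithin] with y (hy : y ∈ Ioi (0:ℝ))
    have hypos : (0:ℝ) < y := hy
    have hDy : 0 < D y := hΦ.pos y (ne_of_gt hypos)
    have h7 : y / ((D y)^2)⁻¹ = y * (D y)^2 := by
      field_simp
    show Real.sqrt (y / ((D y)^2)⁻¹) = D y * Real.sqrt y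
    rw [h7, Real.sqrt_mul hypos.le, Real.sqrt_sq hDy.le]
    ring
  -- Step 3 : Φ y / √y → 1
  have hPhiSqrt : Tendsto (fun y => Φ y / Real.sqrt y) (nhdsWithin 0 (Ioi 0)) (nhds 1) := by
    have hPhi0 : Tendsto Φ (nhdsWithin 0 (Ioi 0)) (nhds 0) := by
      have h2 := (hΦ.continuous.tendsto 0).mono_left
        (nhdsWithin_le_nhds (s := Ioi (0:ℝ)))
      rwa [Φ0] at h2
    have hsqrt0 : Tendsto (fun y => Real.sqrt y) (nhdsWithin 0 (Ioi 0)) (nhds 0) := by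
      have h2 := (Real.continuous_sqrt.tendsto 0).mono_left
        (nhdsWithin_le_nhds (s := Ioi (0:ℝ)))
      simpa using h2
    rw [Metric.tendsto_nhds]
    intro ε hε
    set ε' : ℝ := min (ε/2) 1 with hε'def
    have hε'pos : 0 < ε' := lt_min (by linarith) (by norm_num)
    have hε'lt : ε' < ε := lt_of_le_of_lt (min_le_left _ _) (by linarith)
    have hev : ∀ᶠ y in nhdsWithin 0 (Ioi 0),
        D y * Real.sqrt y ∈ Ioo (1/2 - ε'/2) (1/2 + ε'/2) := by
      exact hDsqrt.eventually (Ioo_mem_nhds (by linarith) (by linarith))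
    rw [eventually_nhdsWithin_iff, Metric.eventually_nhds_iff] at hev
    obtain ⟨δ, hδpos, hδ⟩ := hev
    have hδ' : ∀ z ∈ Ioo (0:ℝ) δ, D z * Real.sqrt z ∈ Ioo (1/2 - ε'/2) (1/2 + ε'/2) := by
      intro z hz
      exact hδ (by simpa [Real.dist_eq, abs_of_pos hz.1] using hz.2) hz.1
    -- derivative facts
    have hsder : ∀ z : ℝ, 0 < z → HasDerivAt (fun y => Real.sqrt y) (1 / (2 * Real.sqrt z)) z :=
      fun z hz => Real.hasDerivAt_sqrt (ne_of_gt hz)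
    -- upper bound : Φ y ≤ (1+ε')√y
    have hup := DGFaux.nonneg_of_deriv (fun y => (1 + ε') * Real.sqrt y - Φ y) δ
      (fun z hz => by
        refine ⟨(1 + ε') * (1 / (2 * Real.sqrt z)) - D z, ?_, ?_⟩
        · have h1 := (hδ' z hz).2
          have hsz : 0 < Real.sqrt z := Real.sqrt_pos.mpr hz.1
          rw [sub_nonneg]
          have h3 : (1 + ε') * (1 / (2 * Real.sqrt z)) = (1/2 + ε'/2) / Real.sqrt z := by
            field_simp
          rw [h3, le_div_iff₀ hsz]
          linarith
        · exact ((hsder z hz.1).const_mul (1 + ε')).sub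
            ((hΦ.diff z (ne_of_gt hz.1)).hasDerivAt))
      (by
        have := (hsqrt0.const_mul (1 + ε')).sub hPhi0
        simpa using this)
    -- lower bound : (1-ε')√y ≤ Φ y
    have hlo := DGFaux.nonneg_of_deriv (fun y => Φ y - (1 - ε') * Real.sqrt y) δ
      (fun z hz => by
        refine ⟨D z - (1 - ε') * (1 / (2 * Real.sqrt z)), ?_, ?_⟩
        · have h1 := (hδ' z hz).1
          have hsz : 0 < Real.sqrt z := Real.sqrt_pos.mpr hz.1
          rw [sub_nonneg]
          have h3 : (1 - ε') * (1 / (2 * Real.sqrt z)) = (1/2 - ε'/2) / Real.sqrt z := by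
            field_simp
          rw [h3, div_le_iff₀ hsz]
          linarith
        · exact ((hΦ.diff z (ne_of_gt hz.1)).hasDerivAt).sub
            ((hsder z hz.1).const_mul (1 - ε')))
      (by
        have := hPhi0.sub (hsqrt0.const_mul (1 - ε'))
        simpa using this)
    filter_upwards [Ioo_mem_nhdsGT_of_mem ⟨le_refl (0:ℝ), hδpos⟩] with y hy
    have h1 := hup y hy
    have h2 := hlo y hy
    have hsy : 0 < Real.sqrt y := Real.sqrt_pos.mpr hy.1
    rw [Real.dist_eq, abs_lt]
    constructor
    · have : 1 - ε' ≤ Φ y / Real.sqrt y := by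
        rw [le_div_iff₀ hsy]; linarith
      linarith
    · have : Φ y / Real.sqrt y ≤ 1 + ε' := by
        rw [div_le_iff₀ hsy]; linarith
      linarith
  -- Step 4 : conclude
  have := hPhiSqrt.mul hPhiSqrt
  rw [show (1:ℝ) * 1 = 1 by norm_num] at this
  refine this.congr' ?_
  filter_upwards [self_mem_nhdsWithin] with y (hy : y ∈ Ioi (0:ℝ))
  have hypos : (0:ℝ) < y := hy
  rw [div_mul_div_comm, Real.mul_self_sqrt hypos.le, sq]

theorem stmt_7 (Φ : ℝ → ℝ) (hΦ : IsDGF Φ) (k₃ : ℝ) (hk₃ : 0 < k₃)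
    (ν₁ : ℝ → ℝ) (hν₁ : ν₁ = fun x => k₃⁻¹ * Φ (k₃^2 * x)) (x : ℝ) (hx : x ≠ 0) :
    Tendsto (fun α : ℝ => (ν₁ (α^2 * x))^2 / α^2) (nhdsWithin 0 {(0:ℝ)}ᶜ) (nhds |x|) := by
  have key := DGFaux.phi_sq_div Φ hΦ
  have habs : ∀ y : ℝ, (Φ y)^2 = (Φ |y|)^2 := by
    intro y
    rcases abs_choice y with h | h
    · rw [h]
    · rw [h, show Φ (-y) = -Φ y from hΦ.odd y]; ring
  set w : ℝ → ℝ := fun α => k₃^2 * α^2 * |x| with hw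
  have hwpos : ∀ α : ℝ, α ≠ 0 → 0 < w α := by
    intro α hα
    have : 0 < |x| := abs_pos.mpr hx
    positivity
  have hwt : Tendsto w (nhdsWithin 0 {(0:ℝ)}ᶜ) (nhdsWithin 0 (Ioi 0)) := by
    rw [tendsto_nhdsWithin_iff]
    constructor
    · have hc : Continuous w := by fun_prop
      have := (hc.tendsto 0).mono_left (nhdsWithin_le_nhds (s := {(0:ℝ)}ᶜ))
      simpa [hw] using this
    · filter_upwards [self_mem_nhdsWithin] with α (hα : α ≠ 0)
      exact hwpos α hα
  have h1 : Tendsto (fun α => (Φ (w α))^2 / w α * |x|) (nhdsWithin 0 {(0:ℝ)}ᶜ)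
      (nhds |x|) := by
    have := (key.comp hwt).mul_const |x|
    simpa using this
  refine h1.congr' ?_
  filter_upwards [self_mem_nhdsWithin] with α (hα : α ≠ 0)
  have habs2 : |k₃^2 * (α^2 * x)| = w α := by
    rw [abs_mul, abs_mul, abs_of_nonneg (by positivity : (0:ℝ) ≤ k₃^2),
      abs_of_nonneg (by positivity : (0:ℝ) ≤ α^2)]
    simp only [hw]
    ring
  have hΦeq : Φ (k₃^2 * (α^2 * x)) ^ 2 = Φ (w α) ^ 2 := by
    rw [habs (k₃^2 * (α^2 * x)), habs2]
  rw [hν₁]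
  simp only
  rw [mul_pow, hΦeq]
  have hxabs : |x| ≠ 0 := abs_ne_zero.mpr hx
  have hk₃' : k₃ ≠ 0 := ne_of_gt hk₃
  field_simp [hw]
  ring
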